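/- Cohomological k-consistency is transitive: for finite relational structures A, B, C over a common signature, A →ᶻ_k B and B →ᶻ_k C imply A →ᶻ_k C. -/

import Mathlib

open scoped Classical

/-- A (relational) signature: a type of relation symbols with arities. -/
structure Sig where
  symb : Type
  ar : symb → ℕ

/-- A relational structure over a signature `σ`. -/
structure Str (σ : Sig) where
  carrier : Type
  rel : ∀ r : σ.symb, (Fin (σ.ar r) → carrier) → Prop

/-- A (total) homomorphism of relational structures. -/
def IsHom {σ : Sig} (A B : Str σ) (h : A.carrier → B.carrier) : Prop :=
  ∀ r t, A.rel r t → B.rel r (fun i => h (t i))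

/-- An isomorphism of relational structures: a bijection preserving and reflecting relations. -/
def IsIso {σ : Sig} (A B : Str σ) (h : A.carrier → B.carrier) : Prop :=
  Function.Bijective h ∧ ∀ r t, A.rel r t ↔ B.rel r (fun i => h (t i))

/-- Domain of a partial function (coded as an `Option`-valued function). -/
def pdom {α β : Type*} (s : α → Option β) : Set α := {a | s a ≠ none}

/-- Image of a partial function. -/
def pim {α β : Type*} (s : α → Option β) : Set β := {b | ∃ a, s a = some b}

/-- Restriction of a partial function to a set. -/
noncomputable def restrictP {α β : Type*} (s : α → Option β) (U : Set α) : α → Option β :=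
  fun a => if a ∈ U then s a else none

/-- A total function viewed as a partial function. -/
def total {α β : Type*} (h : α → β) : α → Option β := fun a => some (h a)

/-- A partial homomorphism: preserves related tuples lying in its domain. -/
def IsPHom {σ : Sig} (A B : Str σ) (s : A.carrier → Option B.carrier) : Prop :=
  ∀ r (t : Fin (σ.ar r) → A.carrier) (t' : Fin (σ.ar r) → B.carrier),
    A.rel r t → (∀ i, s (t i) = some (t' i)) → B.rel r t'

/-- A partial isomorphism: an injective partial homomorphism reflecting relations. -/
def IsPIso {σ : Sig} (A B : Str σ) (s : A.carrier → Option B.carrier) : Prop :=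
  IsPHom A B s ∧
  (∀ a a' b, s a = some b → s a' = some b → a = a') ∧
  (∀ r (t : Fin (σ.ar r) → A.carrier) (t' : Fin (σ.ar r) → B.carrier),
    B.rel r t' → (∀ i, s (t i) = some (t' i)) → A.rel r t)

/-- `Hom_k(A,B)`: partial homomorphisms with domain of size at most `k`. -/
def Homk {σ : Sig} (k : ℕ) (A B : Str σ) : Set (A.carrier → Option B.carrier) :=
  {s | IsPHom A B s ∧ (pdom s).Finite ∧ (pdom s).ncard ≤ k}

/-- `Isom_k(A,B)`: partial isomorphisms with domain of size at most `k`. -/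
def Isomk {σ : Sig} (k : ℕ) (A B : Str σ) : Set (A.carrier → Option B.carrier) :=
  {s | IsPIso A B s ∧ (pdom s).Finite ∧ (pdom s).ncard ≤ k}

/-- `s ∪ {(a,b)}`: extend a partial function by one value. -/
noncomputable def extend {α β : Type*} (s : α → Option β) (a : α) (b : β) : α → Option β :=
  fun x => if x = a then some b else s x

/-- Downward closure: closed under restriction. -/
def DownClosed {α β : Type*} (S : Set (α → Option β)) : Prop :=
  ∀ s ∈ S, ∀ U, restrictP s U ∈ S

/-- `Forth S s`: for all `a` there is `b` with `s ∪ {(a,b)} ∈ S`. -/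
def Forth {α β : Type*} (S : Set (α → Option β)) (s : α → Option β) : Prop :=
  ∀ a, ∃ b, extend s a b ∈ S

/-- The forth property for all members with domain of size `< k`. -/
def HasForth {α β : Type*} (k : ℕ) (S : Set (α → Option β)) : Prop :=
  ∀ s ∈ S, (pdom s).ncard < k → Forth S s

/-- Bijective forth: there is a bijection `b` with `s ∪ {(a, b a)} ∈ S` for all `a`. -/
def BijForth {α β : Type*} (S : Set (α → Option β)) (s : α → Option β) : Prop :=
  ∃ b : α → β, Function.Bijective b ∧ ∀ a, extend s a (b a) ∈ S

/-- The bijective forth property for all members with domain of size `< k`. -/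
def HasBijForth {α β : Type*} (k : ℕ) (S : Set (α → Option β)) : Prop :=
  ∀ s ∈ S, (pdom s).ncard < k → BijForth S s

/-- Restriction of a formal ℤ-linear combination of partial functions, collecting like terms. -/
noncomputable def restrictZ {α β : Type*} (U : Set α) (r : (α → Option β) →₀ ℤ) :
    (α → Option β) →₀ ℤ :=
  Finsupp.mapDomain (fun s => restrictP s U) r

/-- A global ℤ-linear section of `S` over the contexts of size at most `k`. -/
def IsZSection {α β : Type*} (k : ℕ) (S : Set (α → Option β))
    (r : Set α → ((α → Option β) →₀ ℤ)) : Prop :=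
  (∀ U : Set α, U.Finite → U.ncard ≤ k → ∀ t ∈ (r U).support, t ∈ S ∧ pdom t = U) ∧
  (∀ U U' : Set α, U.Finite → U.ncard ≤ k → U'.Finite → U'.ncard ≤ k →
    restrictZ (U ∩ U') (r U) = restrictZ (U ∩ U') (r U'))

/-- `s` is ℤ-extendable in `S`: some global ℤ-linear section restricts to `s` at its domain. -/
def ZExt {α β : Type*} (k : ℕ) (S : Set (α → Option β)) (s : α → Option β) : Prop :=
  ∃ r, IsZSection k S r ∧ r (pdom s) = Finsupp.single s 1

/-- The set of restrictions of a total function `h` to subsets of size at most `k`. -/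
def Sres {α β : Type*} (h : α → β) (k : ℕ) : Set (α → Option β) :=
  {s | ∃ U : Set α, U.Finite ∧ U.ncard ≤ k ∧ s = restrictP (total h) U}

/-- `A →_k B`: k-consistency (existence of a nonempty downward-closed forth set). -/
def karrow {σ : Sig} (k : ℕ) (A B : Str σ) : Prop :=
  ∃ S : Set (A.carrier → Option B.carrier),
    S.Nonempty ∧ S ⊆ Homk k A B ∧ DownClosed S ∧ HasForth k S

/-- `A →ᶻ_k B`: cohomological k-consistency. -/
def cohomConsistent {σ : Sig} (k : ℕ) (A B : Str σ) : Prop :=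
  ∃ S : Set (A.carrier → Option B.carrier), S.Nonempty ∧ S ⊆ Homk k A B ∧
    DownClosed S ∧ HasForth k S ∧ ∀ s ∈ S, ZExt k S s

/-- Composition of partial functions. -/
def pcomp {α β γ : Type*} (s : β → Option γ) (t : α → Option β) : α → Option γ :=
  fun a => (t a).bind s

section Helpers
variable {α β γ : Type*}

lemma pdom_subset_pcomp (u : β → Option γ) (s : α → Option β) :
    pdom (pcomp u s) ⊆ pdom s := by
  intro a ha
  simp only [pdom, pcomp, Set.mem_setOf_eq] at *
  intro h; rw [h] at ha; exact ha rfl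

lemma restrict_pcomp (u : β → Option γ) (s : α → Option β) (W : Set α) :
    restrictP (pcomp u s) W = pcomp u (restrictP s W) := by
  funext a
  simp only [restrictP, pcomp]
  by_cases h : a ∈ W <;> simp [h]

lemma pdom_restrict (s : α → Option β) (U : Set α) :
    pdom (restrictP s U) = U ∩ pdom s := by
  ext a
  simp only [pdom, restrictP, Set.mem_setOf_eq, Set.mem_inter_iff]
  by_cases h : a ∈ U <;> simp [h]

lemma pim_restrict_subset (s : α → Option β) (W : Set α) :
    pim (restrictP s W) ⊆ pim s := by
  rintro b ⟨a, ha⟩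
  simp only [restrictP] at ha
  by_cases h : a ∈ W
  · exact ⟨a, by simpa [h] using ha⟩
  · simp [h] at ha

lemma restrict_pdom_eq (s : α → Option β) : restrictP s (pdom s) = s := by
  funext a
  simp only [restrictP, pdom, Set.mem_setOf_eq]
  by_cases h : s a = none <;> simp [h]

lemma pcomp_restrict_pim (u : β → Option γ) (s : α → Option β) (V : Set β)
    (h : pim s ⊆ V) : pcomp (restrictP u V) s = pcomp u s := by
  funext a
  simp only [pcomp]
  cases hs : s a with
  | none => rfl
  | some b =>
    have hb : b ∈ V := h ⟨a, hs⟩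
    simp [restrictP, hb]

lemma pdom_pcomp (u : β → Option γ) (s : α → Option β) (h : pim s ⊆ pdom u) :
    pdom (pcomp u s) = pdom s := by
  refine Set.Subset.antisymm (pdom_subset_pcomp u s) ?_
  intro a ha
  simp only [pdom, Set.mem_setOf_eq] at *
  cases hs : s a with
  | none => exact absurd hs ha
  | some b =>
    have : b ∈ pdom u := h ⟨a, hs⟩
    simpa [pcomp, hs, pdom] using this

lemma pim_some_subset (s : α → Option β) :
    (some '' pim s) ⊆ s '' pdom s := by
  rintro _ ⟨b, ⟨a, ha⟩, rfl⟩
  exact ⟨a, by simp [pdom, ha], ha⟩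

lemma pim_finite {s : α → Option β} (h : (pdom s).Finite) : (pim s).Finite := by
  have h2 : (s '' pdom s).Finite := h.image s
  have h3 : (some '' pim s).Finite := h2.subset (pim_some_subset s)
  have := h3.preimage (f := (some : β → Option β))
    (Option.some_injective β).injOn
  exact this.subset (by intro b hb; exact Set.mem_preimage.mpr (Set.mem_image_of_mem _ hb))

lemma pim_ncard_le {s : α → Option β} (h : (pdom s).Finite) :
    (pim s).ncard ≤ (pdom s).ncard := by
  have h1 : (pim s).ncard = (some '' pim s).ncard :=
    (Set.ncard_image_of_injective _ (Option.some_injective β)).symm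
  have h2 : (some '' pim s).ncard ≤ (s '' pdom s).ncard :=
    Set.ncard_le_ncard (pim_some_subset s) (h.image s)
  have h3 : (s '' pdom s).ncard ≤ (pdom s).ncard := Set.ncard_image_le h
  omega

lemma pim_extend_subset (s : α → Option β) (a : α) (b : β) :
    pim (extend s a b) ⊆ insert b (pim s) := by
  rintro c ⟨x, hx⟩
  simp only [extend] at hx
  by_cases h : x = a
  · simp [h] at hx; simp [hx]
  · exact Set.mem_insert_of_mem _ ⟨x, by simpa [h] using hx⟩

lemma pdom_extend (s : α → Option β) (a : α) (b : β) :
    pdom (extend s a b) = insert a (pdom s) := by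
  ext x
  simp only [pdom, extend, Set.mem_setOf_eq, Set.mem_insert_iff]
  by_cases h : x = a <;> simp [h]

end Helpers
/-- Cohomological k-consistency is transitive. -/
theorem stmt9 (σ : Sig) (A B C : Str σ)
    [Fintype A.carrier] [Fintype B.carrier] [Fintype C.carrier] (k : ℕ)
    (hAB : cohomConsistent k A B) (hBC : cohomConsistent k B C) :
    cohomConsistent k A C := by
  obtain ⟨S1, hS1ne, hS1hom, hS1dc, hS1forth, hS1z⟩ := hAB
  obtain ⟨S2, hS2ne, hS2hom, hS2dc, hS2forth, hS2z⟩ := hBC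
  set S : Set (A.carrier → Option C.carrier) :=
    {t | ∃ s ∈ S1, ∃ u ∈ S2, pim s ⊆ pdom u ∧ t = pcomp u s} with hS
  -- canonical witnesses: given t ∈ S, produce normalized s₀, u₀
  have hnorm : ∀ t ∈ S, ∃ s₀ ∈ S1, ∃ u₀ ∈ S2,
      pdom s₀ = pdom t ∧ pdom u₀ = pim s₀ ∧ t = pcomp u₀ s₀ := by
    rintro t ⟨s, hs, u, hu, him, rfl⟩
    set s₀ := restrictP s (pdom (pcomp u s)) with hs₀
    have hds₀ : pdom s₀ = pdom (pcomp u s) := by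
      rw [hs₀, pdom_restrict]
      exact Set.inter_eq_left.mpr (pdom_subset_pcomp u s)
    have hcomp₀ : pcomp u s₀ = pcomp u s := by
      rw [hs₀, ← restrict_pcomp, pdom_pcomp u s him, ← pdom_pcomp u s him,
        restrict_pdom_eq]
    set u₀ := restrictP u (pim s₀) with hu₀
    have hims₀ : pim s₀ ⊆ pdom u := (pim_restrict_subset s _).trans him
    have hdu₀ : pdom u₀ = pim s₀ := by
      rw [hu₀, pdom_restrict]; exact Set.inter_eq_left.mpr hims₀
    refine ⟨s₀, hS1dc s hs _, u₀, hS2dc u hu _, hds₀, hdu₀, ?_⟩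
    rw [hu₀, pcomp_restrict_pim u s₀ _ subset_rfl, hcomp₀]
  have hSsub : S ⊆ Homk k A C := by
    rintro t ⟨s, hs, u, hu, him, rfl⟩
    obtain ⟨hsh, hsf, hsc⟩ := hS1hom hs
    obtain ⟨huh, huf, huc⟩ := hS2hom hu
    have hsub := pdom_subset_pcomp u s
    refine ⟨?_, hsf.subset hsub, le_trans (Set.ncard_le_ncard hsub hsf) hsc⟩
    intro r tA tC hrel hmap
    have hmid : ∀ i, ∃ b, s (tA i) = some b ∧ u b = some (tC i) := by
      intro i
      have := hmap i
      cases hsi : s (tA i) with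
      | none => rw [pcomp] at this; rw [hsi] at this; simp at this
      | some b => exact ⟨b, rfl, by rw [pcomp, hsi] at this; exact this⟩
    choose tB htB1 htB2 using hmid
    exact huh r tB tC (hsh r tA tB hrel htB1) htB2
  have hempS1 : (fun _ => (none : Option B.carrier)) ∈ S1 := by
    obtain ⟨s, hs⟩ := hS1ne
    have := hS1dc s hs ∅
    convert this using 1
    funext a; simp [restrictP]
  have hempS2 : (fun _ => (none : Option C.carrier)) ∈ S2 := by
    obtain ⟨u, hu⟩ := hS2ne
    have := hS2dc u hu ∅
    convert this using 1
    funext a; simp [restrictP]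
  have hSne : S.Nonempty := by
    refine ⟨fun _ => none, fun _ => none, hempS1, fun _ => none, hempS2, ?_, ?_⟩
    · rintro b ⟨a, ha⟩; simp at ha
    · funext a; simp [pcomp]
  have hSdc : DownClosed S := by
    rintro t ⟨s, hs, u, hu, him, rfl⟩ W
    exact ⟨restrictP s W, hS1dc s hs W, u, hu,
      (pim_restrict_subset s W).trans him, restrict_pcomp u s W⟩
  have hSforth : HasForth k S := by
    intro t htS hcard
    obtain ⟨s₀, hs₀, u₀, hu₀, hds₀, hdu₀, rfl⟩ := hnorm t htS
    intro a
    have hs₀fin : (pdom s₀).Finite := (hS1hom hs₀).2.1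
    have hcard' : (pdom s₀).ncard < k := by
      rwa [← hds₀] at hcard
    obtain ⟨b, hb⟩ := hS1forth s₀ hs₀ hcard' a
    have hu₀card : (pdom u₀).ncard < k := by
      rw [hdu₀]
      exact lt_of_le_of_lt (pim_ncard_le hs₀fin) hcard'
    have hkey : ∃ c, extend u₀ b c ∈ S2 ∧
        ∀ b' ∈ pdom u₀, extend u₀ b c b' = u₀ b' := by
      by_cases hbd : b ∈ pdom u₀
      · cases hub : u₀ b with
        | none => exact absurd hub hbd
        | some c =>
          have heq : extend u₀ b c = u₀ := by
            funext x; simp only [extend]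
            by_cases hx : x = b
            · rw [if_pos hx, hx, hub]
            · rw [if_neg hx]
          exact ⟨c, by rw [heq]; exact hu₀, fun b' _ => by rw [heq]⟩
      · obtain ⟨c, hc⟩ := hS2forth u₀ hu₀ hu₀card b
        refine ⟨c, hc, fun b' hb' => ?_⟩
        show (if b' = b then some c else u₀ b') = u₀ b'
        exact if_neg (fun (h : b' = b) => hbd (h ▸ hb'))
    obtain ⟨c, hc, hcpt⟩ := hkey
    refine ⟨c, extend s₀ a b, hb, extend u₀ b c, hc, ?_, ?_⟩
    · refine (pim_extend_subset s₀ a b).trans ?_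
      rw [pdom_extend, hdu₀]
    · funext x
      by_cases hx : x = a
      · simp [hx, extend, pcomp]
      · show (if x = a then some c else pcomp u₀ s₀ x) = _
        rw [if_neg hx]
        show pcomp u₀ s₀ x = ((if x = a then some b else s₀ x).bind _)
        rw [if_neg hx]
        cases hsx : s₀ x with
        | none => simp [pcomp, hsx]
        | some b' =>
          have hb' : b' ∈ pdom u₀ := hdu₀ ▸ ⟨x, hsx⟩
          simp only [pcomp, hsx, Option.bind_some]
          exact (hcpt b' hb').symm
  refine ⟨S, hSne, hSsub, hSdc, hSforth, ?_⟩
  intro t htS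
  obtain ⟨s₀, hs₀, u₀, hu₀, hds₀, hdu₀, hteq⟩ := hnorm t htS
  obtain ⟨r1, ⟨hr1supp, hr1compat⟩, hr1s⟩ := hS1z s₀ hs₀
  obtain ⟨r2, ⟨hr2supp, hr2compat⟩, hr2u⟩ := hS2z u₀ hu₀
  set g : (A.carrier → Option B.carrier) → ((A.carrier → Option C.carrier) →₀ ℤ) :=
    fun s' => Finsupp.mapDomain (fun u' => pcomp u' s') (r2 (pim s')) with hg
  set r : Set A.carrier → ((A.carrier → Option C.carrier) →₀ ℤ) :=
    fun U => (r1 U).sum (fun s' n => n • g s') with hr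
  have hL : ∀ (s' : A.carrier → Option B.carrier), (pdom s').Finite →
      (pdom s').ncard ≤ k → ∀ W : Set A.carrier,
      restrictZ W (g s') = g (restrictP s' W) := by
    intro s' hfin hcard W
    have hpimfin : (pim s').Finite := pim_finite hfin
    have hpimcard : (pim s').ncard ≤ k := le_trans (pim_ncard_le hfin) hcard
    set s₂ := restrictP s' W with hs₂
    have hsub : pim s₂ ⊆ pim s' := pim_restrict_subset s' W
    have hfin₂ : (pim s₂).Finite := hpimfin.subset hsub
    have hcard₂ : (pim s₂).ncard ≤ k :=
      le_trans (Set.ncard_le_ncard hsub hpimfin) hpimcard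
    calc restrictZ W (g s')
        = Finsupp.mapDomain (fun u' => restrictP (pcomp u' s') W) (r2 (pim s')) := by
          rw [hg, restrictZ, ← Finsupp.mapDomain_comp]; rfl
      _ = Finsupp.mapDomain (fun u' => pcomp u' s₂) (r2 (pim s')) := by
          simp only [restrict_pcomp]; rfl
      _ = Finsupp.mapDomain ((fun u' => pcomp u' s₂) ∘ (fun u' => restrictP u' (pim s₂)))
            (r2 (pim s')) := by
          refine Finsupp.mapDomain_congr (fun u' _ => ?_)
          exact (pcomp_restrict_pim u' s₂ _ subset_rfl).symm
      _ = Finsupp.mapDomain (fun u' => pcomp u' s₂) (restrictZ (pim s₂) (r2 (pim s'))) := by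
          rw [Finsupp.mapDomain_comp]; rfl
      _ = Finsupp.mapDomain (fun u' => pcomp u' s₂) (restrictZ (pim s₂) (r2 (pim s₂))) := by
          have hcmp := hr2compat (pim s') (pim s₂) hpimfin hpimcard hfin₂ hcard₂
          rw [Set.inter_eq_right.mpr hsub] at hcmp
          rw [hcmp]
      _ = Finsupp.mapDomain (fun u' => pcomp u' s₂) (r2 (pim s₂)) := by
          congr 1
          rw [restrictZ]
          have hid : ∀ u' ∈ (r2 (pim s₂)).support,
              restrictP u' (pim s₂) = id u' := by
            intro u' hu'
            have hdu' := (hr2supp (pim s₂) hfin₂ hcard₂ u' hu').2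
            rw [← hdu', restrict_pdom_eq]; rfl
          rw [Finsupp.mapDomain_congr hid, Finsupp.mapDomain_id]
      _ = g s₂ := rfl
  refine ⟨r, ⟨?_, ?_⟩, ?_⟩
  · -- support condition
    intro U hUfin hUcard t' ht'
    have hbi := Finsupp.support_sum ht'
    obtain ⟨s', hs'supp, ht's'⟩ := Finset.mem_biUnion.mp hbi
    obtain ⟨hs'S1, hs'dom⟩ := hr1supp U hUfin hUcard s' hs'supp
    have ht'g : t' ∈ (g s').support := Finsupp.support_smul ht's'
    rw [hg] at ht'g
    have ht'im := Finsupp.mapDomain_support ht'g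
    obtain ⟨u', hu'supp, rfl⟩ := Finset.mem_image.mp ht'im
    have hpimfin : (pim s').Finite := pim_finite (hs'dom ▸ hUfin)
    have hpimcard : (pim s').ncard ≤ k :=
      le_trans (pim_ncard_le (hs'dom ▸ hUfin)) (hs'dom ▸ hUcard)
    obtain ⟨hu'S2, hu'dom⟩ := hr2supp (pim s') hpimfin hpimcard u' hu'supp
    refine ⟨⟨s', hs'S1, u', hu'S2, hu'dom.ge, rfl⟩, ?_⟩
    rw [pdom_pcomp u' s' hu'dom.ge, hs'dom]
  · -- compatibility
    intro U U' hUfin hUcard hU'fin hU'card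
    have key : ∀ V : Set A.carrier, V.Finite → V.ncard ≤ k → ∀ W : Set A.carrier,
        restrictZ W (r V) = (restrictZ W (r1 V)).sum (fun s' n => n • g s') := by
      intro V hVfin hVcard W
      show Finsupp.mapDomain (fun s => restrictP s W) ((r1 V).sum fun s' n => n • g s') = _
      rw [show (Finsupp.mapDomain (fun s => restrictP s W)
            ((r1 V).sum fun s' n => n • g s'))
          = (r1 V).sum (fun s' n =>
            Finsupp.mapDomain (fun s => restrictP s W) (n • g s'))
        from map_finsuppSum (Finsupp.mapDomain.addMonoidHom _) _ _]
      have step1 : ((r1 V).sum fun s' n =>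
            Finsupp.mapDomain (fun x => restrictP x W) (n • g s'))
          = (r1 V).sum fun s' n => n • g (restrictP s' W) := by
        refine Finsupp.sum_congr (fun s' hs' => ?_)
        obtain ⟨_, hdom⟩ := hr1supp V hVfin hVcard s' hs'
        rw [Finsupp.mapDomain_smul]
        rw [show Finsupp.mapDomain (fun x => restrictP x W) (g s') = restrictZ W (g s')
          from rfl]
        rw [hL s' (hdom ▸ hVfin) (hdom ▸ hVcard) W]
      rw [step1, restrictZ]
      rw [Finsupp.sum_mapDomain_index (fun b => zero_smul ℤ (g b))
        (fun b m₁ m₂ => add_smul m₁ m₂ (g b))]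
    rw [key U hUfin hUcard (U ∩ U'), key U' hU'fin hU'card (U ∩ U'),
      hr1compat U U' hUfin hUcard hU'fin hU'card]
  · -- value at pdom t
    have hdt : pdom t = pdom s₀ := hds₀.symm
    rw [hdt]
    show (r1 (pdom s₀)).sum (fun s' n => n • g s') = _
    rw [hr1s, Finsupp.sum_single_index (zero_smul ℤ (g s₀)), one_smul]
    show Finsupp.mapDomain (fun u' => pcomp u' s₀) (r2 (pim s₀)) = _
    rw [show pim s₀ = pdom u₀ from hdu₀.symm, hr2u, Finsupp.mapDomain_single, ← hteq]
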